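/- For every integer n ≥ 0 and every r ∈ (0,1), the remainder S_n(r) = J_n(r) − r^n/(2^n n!) satisfies the two-sided bound − (r^{n+2} / (2^{n+1} Γ(n+3/2) √π)) ∫_0^1 (1−t²)^{n+1/2} dt ≤ S_n(r) ≤ − (r^{n+2} cos r / (2^{n+1} Γ(n+3/2) √π)) ∫_0^1 (1−t²)^{n+1/2} dt. -/

import Mathlib

open Real Set

/-- Bessel function of the first kind of integer order, via the Poisson integral
representation. -/
noncomputable def besselJ (n : ℕ) (r : ℝ) : ℝ :=
  r ^ n / (2 ^ n * Real.Gamma ((n : ℝ) + 1 / 2) * Real.sqrt Real.pi) *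
    ∫ t in (-1 : ℝ)..1, Real.cos (r * t) * (1 - t ^ 2) ^ ((n : ℝ) - 1 / 2)

/-- The remainder `S_n(r) = J_n(r) − r^n/(2^n n!)`. -/
noncomputable def besselS (n : ℕ) (r : ℝ) : ℝ :=
  besselJ n r - r ^ n / (2 ^ n * Nat.factorial n)

open MeasureTheory intervalIntegral

namespace BesselAux

lemma meas_f (c : ℝ) : Measurable fun t : ℝ => (1 - t ^ 2) ^ c :=
  by measurability

lemma cont_f {c : ℝ} (hc : 0 ≤ c) : Continuous fun t : ℝ => (1 - t ^ 2) ^ c :=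
  (continuous_const.sub (continuous_pow 2)).rpow_const (fun _ => Or.inr hc)

lemma intInt01 {c : ℝ} (hc : -1 < c) :
    IntervalIntegrable (fun t : ℝ => (1 - t ^ 2) ^ c) volume 0 1 := by
  rcases le_or_gt 0 c with h | h
  · exact (cont_f h).intervalIntegrable _ _
  · have hbase : IntervalIntegrable (fun x : ℝ => x ^ c) volume 0 1 :=
      intervalIntegrable_rpow' hc
    have hint : IntervalIntegrable (fun t : ℝ => (1 - t) ^ c) volume 0 1 := by
      have := hbase.comp_sub_left 1
      simpa using this.symm
    refine hint.mono_fun ((meas_f c).aestronglyMeasurable) ?_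
    filter_upwards [MeasureTheory.ae_restrict_mem measurableSet_uIoc] with t ht
    rw [Set.uIoc_of_le (by norm_num : (0:ℝ) ≤ 1)] at ht
    simp only [Real.norm_eq_abs]
    rw [abs_of_nonneg (Real.rpow_nonneg (by nlinarith [ht.1, ht.2] : (0:ℝ) ≤ 1 - t ^ 2) c),
      abs_of_nonneg (Real.rpow_nonneg (by linarith [ht.2] : (0:ℝ) ≤ 1 - t) c)]
    rcases eq_or_lt_of_le ht.2 with h1 | h1
    · subst h1
      norm_num [Real.zero_rpow (show c ≠ 0 by linarith)]
    · exact Real.rpow_le_rpow_of_nonpos (by linarith) (by nlinarith [ht.1.le]) h.le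

lemma intIntFull {c : ℝ} (hc : -1 < c) :
    IntervalIntegrable (fun t : ℝ => (1 - t ^ 2) ^ c) volume (-1) 1 := by
  have h1 := intInt01 hc
  have h2 : IntervalIntegrable (fun t : ℝ => (1 - t ^ 2) ^ c) volume (-1) 0 := by
    have := ((IntervalIntegrable.iff_comp_neg (by simp)).mp h1)
    simpa using this.symm
  exact h2.trans h1


lemma intIntMul {c M : ℝ} (hc : -1 < c) (hM : 0 ≤ M) (φ : ℝ → ℝ) (hφm : Measurable φ)
    (hφb : ∀ t ∈ Set.uIoc (-1:ℝ) 1, |φ t| ≤ M) :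
    IntervalIntegrable (fun t : ℝ => φ t * (1 - t ^ 2) ^ c) volume (-1) 1 := by
  refine ((intIntFull hc).const_mul M).mono_fun
    ((hφm.mul (by measurability : Measurable fun t : ℝ => (1 - t ^ 2) ^ c)).aestronglyMeasurable) ?_
  filter_upwards [MeasureTheory.ae_restrict_mem measurableSet_uIoc] with t ht
  simp only [Real.norm_eq_abs, abs_mul]
  exact mul_le_mul_of_nonneg_right (hφb t ht) (abs_nonneg _) |>.trans_eq
    (by rw [abs_of_nonneg hM])

lemma sq_mem_bound : ∀ t ∈ Set.uIoc (-1:ℝ) 1, |t ^ 2| ≤ (1:ℝ) := by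
  intro t ht
  rw [Set.uIoc_of_le (by norm_num : (-1:ℝ) ≤ 1)] at ht
  rw [abs_of_nonneg (sq_nonneg t)]
  nlinarith [ht.1.le, ht.2]

lemma intIntSq {c : ℝ} (hc : -1 < c) :
    IntervalIntegrable (fun t : ℝ => t ^ 2 * (1 - t ^ 2) ^ c) volume (-1) 1 :=
  intIntMul hc zero_le_one _ (by measurability) sq_mem_bound

lemma ibp {b : ℝ} (hb : 0 < b) :
    ∫ t in (-1:ℝ)..1, (1 - t ^ 2) ^ (b - 1) =
      (2 * b + 1) * ∫ t in (-1:ℝ)..1, t ^ 2 * (1 - t ^ 2) ^ (b - 1) := by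
  have hc : (-1:ℝ) < b - 1 := by linarith
  have I1 := intIntFull hc
  have I2 := intIntSq hc
  set f' : ℝ → ℝ := fun t => (1 - t ^ 2) ^ (b - 1) - (2 * b + 1) * (t ^ 2 * (1 - t ^ 2) ^ (b - 1))
    with hf'
  have hint : IntervalIntegrable f' volume (-1) 1 := I1.sub (I2.const_mul _)
  have hcont : ContinuousOn (fun t : ℝ => t * (1 - t ^ 2) ^ b) (Set.Icc (-1) 1) :=
    (continuous_id.mul (cont_f hb.le)).continuousOn
  have hderiv : ∀ t ∈ Set.Ioo (-1:ℝ) 1,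
      HasDerivAt (fun t : ℝ => t * (1 - t ^ 2) ^ b) (f' t) t := by
    intro t ht
    have h0 : (0:ℝ) < 1 - t ^ 2 := by nlinarith [ht.1, ht.2]
    have hg : HasDerivAt (fun t : ℝ => (1 - t ^ 2) ^ b)
        (-(2 * t) * b * (1 - t ^ 2) ^ (b - 1)) t := by
      have hin : HasDerivAt (fun t : ℝ => 1 - t ^ 2) (-(2 * t)) t := by
        simpa using (hasDerivAt_pow 2 t).const_sub 1
      exact hin.rpow_const (Or.inl h0.ne')
    have := (hasDerivAt_id t).mul hg
    convert this using 1
    · rfl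
    · rfl
    · rfl
    have hsplit : (1 - t ^ 2) ^ b = (1 - t ^ 2) ^ (b - 1) * (1 - t ^ 2) := by
      rw [← Real.rpow_add_one h0.ne' (b - 1)]; ring_nf
    rw [hf']
    simp only [id_eq]
    rw [hsplit]; ring
  have hftc := intervalIntegral.integral_eq_sub_of_hasDeriv_right_of_le
    (by norm_num : (-1:ℝ) ≤ 1) hcont
    (fun t ht => (hderiv t ht).hasDerivWithinAt) hint
  have hzero : (fun t : ℝ => t * (1 - t ^ 2) ^ b) 1 -
      (fun t : ℝ => t * (1 - t ^ 2) ^ b) (-1) = 0 := by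
    norm_num [Real.zero_rpow hb.ne']
  rw [hzero] at hftc
  rw [intervalIntegral.integral_sub I1 (I2.const_mul _),
    intervalIntegral.integral_const_mul] at hftc
  linarith

lemma rec_step {b : ℝ} (hb : 0 < b) :
    ∫ t in (-1:ℝ)..1, (1 - t ^ 2) ^ b =
      (2 * b / (2 * b + 1)) * ∫ t in (-1:ℝ)..1, (1 - t ^ 2) ^ (b - 1) := by
  have hc : (-1:ℝ) < b - 1 := by linarith
  have hsplit : ∫ t in (-1:ℝ)..1, (1 - t ^ 2) ^ b =
      (∫ t in (-1:ℝ)..1, (1 - t ^ 2) ^ (b - 1)) -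
        ∫ t in (-1:ℝ)..1, t ^ 2 * (1 - t ^ 2) ^ (b - 1) := by
    rw [← intervalIntegral.integral_sub (intIntFull hc) (intIntSq hc)]
    apply intervalIntegral.integral_congr_ae
    have h1 : ∀ᵐ (t : ℝ) ∂(volume : Measure ℝ), t ≠ 1 := by
      rw [MeasureTheory.ae_iff]
      simpa using Real.volume_singleton (x := 1)
    filter_upwards [h1] with t ht1 htu
    rw [Set.uIoc_of_le (by norm_num : (-1:ℝ) ≤ 1)] at htu
    have ht : t ∈ Set.Ioo (-1:ℝ) 1 := ⟨htu.1, lt_of_le_of_ne htu.2 ht1⟩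
    have h0 : (0:ℝ) < 1 - t ^ 2 := by nlinarith [ht.1, ht.2]
    have hsp : (1 - t ^ 2) ^ b = (1 - t ^ 2) ^ (b - 1) * (1 - t ^ 2) := by
      rw [← Real.rpow_add_one h0.ne' (b - 1)]; ring_nf
    rw [hsp]; ring
  rw [hsplit, ibp hb]
  have := ibp hb
  field_simp
  ring


lemma base_case : ∫ t in (-1:ℝ)..1, (1 - t ^ 2) ^ (-(1:ℝ)/2) = π := by
  have hint : IntervalIntegrable (fun t : ℝ => (1 - t ^ 2) ^ (-(1:ℝ)/2)) volume (-1) 1 :=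
    intIntFull (by norm_num)
  have hderiv : ∀ t ∈ Set.Ioo (-1:ℝ) 1,
      HasDerivWithinAt Real.arcsin ((1 - t ^ 2) ^ (-(1:ℝ)/2)) (Set.Ioi t) t := by
    intro t ht
    have h0 : (0:ℝ) < 1 - t ^ 2 := by nlinarith [ht.1, ht.2]
    have := Real.hasDerivAt_arcsin (ne_of_gt ht.1) (ne_of_lt ht.2)
    have heq : 1 / Real.sqrt (1 - t ^ 2) = (1 - t ^ 2) ^ (-(1:ℝ)/2) := by
      rw [show -(1:ℝ)/2 = -(1/2) by norm_num, Real.rpow_neg h0.le, Real.sqrt_eq_rpow]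
      rw [one_div]
    exact (heq ▸ this).hasDerivWithinAt
  have := intervalIntegral.integral_eq_sub_of_hasDeriv_right_of_le
    (by norm_num : (-1:ℝ) ≤ 1) Real.continuous_arcsin.continuousOn hderiv hint
  rw [this, Real.arcsin_one, Real.arcsin_neg_one]
  ring

lemma F_val (n : ℕ) :
    ∫ t in (-1:ℝ)..1, (1 - t ^ 2) ^ ((n:ℝ) - 1/2) =
      Real.sqrt π * Real.Gamma ((n:ℝ) + 1/2) / n.factorial := by
  induction n with
  | zero =>
    have : ((0:ℕ):ℝ) - 1/2 = -(1:ℝ)/2 := by norm_num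
    rw [this, base_case]
    rw [show ((0:ℕ):ℝ) + 1/2 = 1/2 by norm_num, Real.Gamma_one_half_eq]
    rw [Nat.factorial_zero]
    rw [Real.mul_self_sqrt Real.pi_pos.le]
    norm_num
  | succ n ih =>
    have hb : (0:ℝ) < (n:ℝ) + 1/2 := by positivity
    have hstep := rec_step hb
    have he1 : ((n:ℝ) + 1/2) - 1 = (n:ℝ) - 1/2 := by ring
    have he2 : (((n+1:ℕ)):ℝ) - 1/2 = (n:ℝ) + 1/2 := by push_cast; ring
    rw [he2, hstep, he1, ih]
    have hG : Real.Gamma ((((n+1:ℕ)):ℝ) + 1/2) = ((n:ℝ) + 1/2) * Real.Gamma ((n:ℝ) + 1/2) := by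
      have : ((((n+1:ℕ)):ℝ) + 1/2) = ((n:ℝ) + 1/2) + 1 := by push_cast; ring
      rw [this, Real.Gamma_add_one hb.ne']
    have hfact : ((n.factorial : ℝ)) ≠ 0 := Nat.cast_ne_zero.mpr n.factorial_ne_zero
    rw [hG, Nat.factorial_succ]
    push_cast
    field_simp
    ring


lemma even_integral {c : ℝ} (hc : 0 ≤ c) :
    ∫ t in (-1:ℝ)..1, (1 - t ^ 2) ^ c = 2 * ∫ t in (0:ℝ)..1, (1 - t ^ 2) ^ c := by
  have hcont := cont_f hc
  have h1 : ∫ t in (-1:ℝ)..0, (1 - t ^ 2) ^ c = ∫ t in (0:ℝ)..1, (1 - t ^ 2) ^ c := by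
    have := intervalIntegral.integral_comp_neg (a := (0:ℝ)) (b := 1)
      (fun t : ℝ => (1 - t ^ 2) ^ c)
    simp only [neg_neg, neg_sq, neg_zero] at this
    rw [← this]
  rw [← intervalIntegral.integral_add_adjacent_intervals
    (hcont.intervalIntegrable (-1) 0) (hcont.intervalIntegrable 0 1), h1]
  ring

lemma cos_lower {x : ℝ} : Real.cos x - 1 ≥ -(x ^ 2 / 2) := by
  have := Real.one_sub_sq_div_two_le_cos (x := x)
  linarith

lemma cos_upper {x : ℝ} (hx0 : 0 ≤ x) (hx1 : x ≤ 1) :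
    Real.cos x - 1 ≤ -(x ^ 2 / 2 * Real.cos x) := by
  have hhalf : x / 2 < π / 2 := by
    have := Real.pi_gt_three
    linarith
  have hcoshalf : 0 ≤ Real.cos (x / 2) := by
    apply Real.cos_nonneg_of_mem_Icc
    constructor <;> [linarith; linarith]
  have htan := Real.le_tan (by linarith : (0:ℝ) ≤ x / 2) hhalf
  have hsin : x / 2 * Real.cos (x / 2) ≤ Real.sin (x / 2) := by
    rcases eq_or_lt_of_le hcoshalf with h | h
    · nlinarith [Real.sin_nonneg_of_nonneg_of_le_pi (by linarith : (0:ℝ) ≤ x/2)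
        (by nlinarith [Real.pi_gt_three] : x/2 ≤ π)]
    · rw [Real.tan_eq_sin_div_cos, le_div_iff₀ h] at htan
      linarith
  have hsinnn : 0 ≤ Real.sin (x / 2) :=
    Real.sin_nonneg_of_nonneg_of_le_pi (by linarith)
      (by nlinarith [Real.pi_gt_three])
  have hsq : (x / 2 * Real.cos (x / 2)) ^ 2 ≤ Real.sin (x / 2) ^ 2 := by
    apply sq_le_sq' _ hsin
    nlinarith
  have hsinsq : Real.sin (x / 2) ^ 2 = 1/2 - Real.cos x / 2 := by
    have := Real.sin_sq_eq_half_sub (x / 2)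
    rw [show 2 * (x / 2) = x by ring] at this
    exact this
  have hcossq : Real.cos (x / 2) ^ 2 = 1/2 + Real.cos x / 2 := by
    have := Real.cos_sq (x / 2)
    rw [show 2 * (x / 2) = x by ring] at this
    exact this
  have hcos1 : Real.cos x ≤ 1 := Real.cos_le_one x
  nlinarith [hsq, sq_nonneg x]

end BesselAux

set_option maxHeartbeats 1000000 in
theorem bessel_remainder_bound (n : ℕ) (r : ℝ) (hr : r ∈ Set.Ioo (0 : ℝ) 1) :
    -(r ^ (n + 2) / (2 ^ (n + 1) * Real.Gamma ((n : ℝ) + 3 / 2) * Real.sqrt Real.pi)) *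
        ∫ t in (0 : ℝ)..1, (1 - t ^ 2) ^ ((n : ℝ) + 1 / 2) ≤ besselS n r ∧
      besselS n r ≤
        -(r ^ (n + 2) * Real.cos r /
            (2 ^ (n + 1) * Real.Gamma ((n : ℝ) + 3 / 2) * Real.sqrt Real.pi)) *
          ∫ t in (0 : ℝ)..1, (1 - t ^ 2) ^ ((n : ℝ) + 1 / 2) := by
  obtain ⟨hr0, hr1⟩ := hr
  have hc : (-1:ℝ) < (n:ℝ) - 1/2 := by
    have : (0:ℝ) ≤ (n:ℝ) := Nat.cast_nonneg n
    linarith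
  set g : ℝ → ℝ := fun t => (1 - t ^ 2) ^ ((n : ℝ) - 1/2) with hg
  have hGpos : 0 < Real.Gamma ((n:ℝ) + 1/2) := Real.Gamma_pos_of_pos (by positivity)
  have hsq : (0:ℝ) < Real.sqrt π := Real.sqrt_pos.mpr Real.pi_pos
  set C : ℝ := 2 ^ n * Real.Gamma ((n : ℝ) + 1/2) * Real.sqrt π with hC
  have hCpos : 0 < C := by positivity
  -- integrability
  have I1 := BesselAux.intIntFull hc
  have I2 := BesselAux.intIntSq hc
  have Icos : IntervalIntegrable (fun t : ℝ => Real.cos (r * t) * g t) volume (-1) 1 :=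
    BesselAux.intIntMul hc zero_le_one _ (Real.measurable_cos.comp (measurable_id.const_mul r))
      (fun t _ => Real.abs_cos_le_one _)
  have Isub : IntervalIntegrable (fun t : ℝ => (Real.cos (r * t) - 1) * g t) volume (-1) 1 :=
    BesselAux.intIntMul hc (by norm_num : (0:ℝ) ≤ 2) _
      ((Real.measurable_cos.comp (measurable_id.const_mul r)).sub measurable_const)
      (fun t _ => by
        have := Real.abs_cos_le_one (r * t)
        rw [abs_sub_comm]
        calc |1 - Real.cos (r*t)| ≤ |(1:ℝ)| + |Real.cos (r*t)| := abs_sub _ _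
          _ ≤ 2 := by rw [abs_one]; linarith)
  -- besselS as integral
  have hSeq : besselS n r = r ^ n / C * ∫ t in (-1:ℝ)..1, (Real.cos (r * t) - 1) * g t := by
    have hsplit : ∫ t in (-1:ℝ)..1, (Real.cos (r * t) - 1) * g t =
        (∫ t in (-1:ℝ)..1, Real.cos (r * t) * g t) - ∫ t in (-1:ℝ)..1, g t := by
      rw [← intervalIntegral.integral_sub Icos I1]
      congr 1; funext t; ring
    rw [hsplit, besselS, besselJ]
    have hFv := BesselAux.F_val n
    rw [mul_sub]
    congr 1
    rw [hFv]
    have hfact : ((n.factorial : ℝ)) ≠ 0 := Nat.cast_ne_zero.mpr n.factorial_ne_zero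
    field_simp [hC]
    ring
    rw [hC]; ring
  -- pointwise bounds on [-1,1]
  have hgnn : ∀ t ∈ Set.Icc (-1:ℝ) 1, 0 ≤ g t := by
    intro t ht
    exact Real.rpow_nonneg (by nlinarith [ht.1, ht.2] : (0:ℝ) ≤ 1 - t ^ 2) _
  have hlow : ∀ t ∈ Set.Icc (-1:ℝ) 1,
      -(r^2/2) * (t^2 * g t) ≤ (Real.cos (r * t) - 1) * g t := by
    intro t ht
    have h := BesselAux.cos_lower (x := r * t)
    have h2 : (-((r*t)^2/2)) * g t ≤ (Real.cos (r*t) - 1) * g t :=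
      mul_le_mul_of_nonneg_right h (hgnn t ht)
    have : -(r^2/2) * (t^2 * g t) = (-((r*t)^2/2)) * g t := by ring
    rw [this]; exact h2
  have hhigh : ∀ t ∈ Set.Icc (-1:ℝ) 1,
      (Real.cos (r * t) - 1) * g t ≤ -(r^2 * Real.cos r / 2) * (t^2 * g t) := by
    intro t ht
    have habs : |t| ≤ 1 := abs_le.mpr ⟨ht.1, ht.2⟩
    set x : ℝ := r * |t| with hx
    have hx0 : 0 ≤ x := by positivity
    have hx1 : x ≤ 1 := by
      calc x ≤ r * 1 := mul_le_mul_of_nonneg_left habs hr0.le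
        _ ≤ 1 := by linarith
    have hxr : x ≤ r := by
      calc x ≤ r * 1 := mul_le_mul_of_nonneg_left habs hr0.le
        _ = r := mul_one r
    have hcosx : Real.cos (r * t) = Real.cos x := by
      rw [hx, show r * |t| = |r * t| by rw [abs_mul, abs_of_nonneg hr0.le]]
      exact (Real.cos_abs (r * t)).symm
    have hxsq : x ^ 2 = r^2 * t^2 := by
      rw [hx]; rw [mul_pow, sq_abs]
    have hcu := BesselAux.cos_upper hx0 hx1
    have hmono : Real.cos r ≤ Real.cos x :=
      Real.cos_le_cos_of_nonneg_of_le_pi hx0 (by nlinarith [Real.pi_gt_three]) hxr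
    have hstep : Real.cos (r * t) - 1 ≤ -(r^2 * t^2 / 2 * Real.cos r) := by
      rw [hcosx]
      calc Real.cos x - 1 ≤ -(x^2/2 * Real.cos x) := hcu
        _ ≤ -(x^2/2 * Real.cos r) := by nlinarith [sq_nonneg x]
        _ = -(r^2 * t^2 / 2 * Real.cos r) := by rw [hxsq]
    have h2 := mul_le_mul_of_nonneg_right hstep (hgnn t ht)
    calc (Real.cos (r * t) - 1) * g t ≤ (-(r^2 * t^2 / 2 * Real.cos r)) * g t := h2
      _ = -(r^2 * Real.cos r / 2) * (t^2 * g t) := by ring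
  -- integral bounds
  set T : ℝ := ∫ t in (-1:ℝ)..1, t^2 * g t with hT
  have hIlow : -(r^2/2) * T ≤ ∫ t in (-1:ℝ)..1, (Real.cos (r * t) - 1) * g t := by
    have := intervalIntegral.integral_mono_on (by norm_num : (-1:ℝ) ≤ 1)
      (I2.const_mul (-(r^2/2))) Isub hlow
    rwa [intervalIntegral.integral_const_mul] at this
  have hIhigh : (∫ t in (-1:ℝ)..1, (Real.cos (r * t) - 1) * g t) ≤
      -(r^2 * Real.cos r / 2) * T := by
    have := intervalIntegral.integral_mono_on (by norm_num : (-1:ℝ) ≤ 1)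
      Isub (I2.const_mul (-(r^2 * Real.cos r / 2))) hhigh
    rwa [intervalIntegral.integral_const_mul] at this
  -- relation between J01 and T
  have hb : (0:ℝ) < (n:ℝ) + 1/2 := by positivity
  have hibp := BesselAux.ibp hb
  have he1 : ((n:ℝ) + 1/2) - 1 = (n:ℝ) - 1/2 := by ring
  rw [he1] at hibp
  have hrec := BesselAux.rec_step hb
  rw [he1] at hrec
  have heven := BesselAux.even_integral (le_of_lt hb)
  have hJ01 : ∫ t in (0:ℝ)..1, (1 - t ^ 2) ^ ((n : ℝ) + 1/2) = ((n:ℝ) + 1/2) * T := by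
    have h2 : (2:ℝ) * ∫ t in (0:ℝ)..1, (1 - t ^ 2) ^ ((n : ℝ) + 1/2)
        = 2 * (((n:ℝ)+1/2) * T) := by
      have hne : (2 * ((n:ℝ)+1/2) + 1) ≠ 0 := by positivity
      rw [← heven, hrec, hibp, ← mul_assoc, div_mul_cancel₀ _ hne]
      ring
    linarith
  -- Gamma relation
  have hG3 : Real.Gamma ((n:ℝ) + 3/2) = ((n:ℝ) + 1/2) * Real.Gamma ((n:ℝ) + 1/2) := by
    have h : (n:ℝ) + 3/2 = ((n:ℝ) + 1/2) + 1 := by ring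
    rw [h, Real.Gamma_add_one hb.ne']
  have hrn : (0:ℝ) ≤ r ^ n / C := by positivity
  constructor
  · have heqlow : -(r ^ (n + 2) / (2 ^ (n + 1) * Real.Gamma ((n : ℝ) + 3 / 2) * Real.sqrt π)) *
        ∫ t in (0 : ℝ)..1, (1 - t ^ 2) ^ ((n : ℝ) + 1 / 2)
        = r ^ n / C * (-(r^2/2) * T) := by
      rw [hJ01, hG3, hC]
      rw [pow_succ, pow_add]
      field_simp
      ring
    rw [heqlow, hSeq]
    exact mul_le_mul_of_nonneg_left hIlow hrn
  · have heqhigh : -(r ^ (n + 2) * Real.cos r /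
          (2 ^ (n + 1) * Real.Gamma ((n : ℝ) + 3 / 2) * Real.sqrt π)) *
        ∫ t in (0 : ℝ)..1, (1 - t ^ 2) ^ ((n : ℝ) + 1 / 2)
        = r ^ n / C * (-(r^2 * Real.cos r / 2) * T) := by
      rw [hJ01, hG3, hC]
      rw [pow_succ, pow_add]
      field_simp
      ring
    rw [heqhigh, hSeq]
    exact mul_le_mul_of_nonneg_left hIhigh hrn
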